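/- For every natural number n ≥ 6, the number of distinct families of ⌊n/2⌋-cliques realizable by simple graphs on Fin n is strictly less than 2^(C(n,⌊n/2⌋)); that is, the image of the map sending a simple graph G on Fin n to the set of all ⌊n/2⌋-element vertex subsets that are cliques in G has cardinality strictly less than 2^(C(n,⌊n/2⌋)). -/
import Mathlib

lemma card_simpleGraph_le (n : ℕ) :
    Fintype.card (SimpleGraph (Fin n)) ≤ 2 ^ n.choose 2 := by
  have h : Function.Injective
      (fun (G : SimpleGraph (Fin n)) (e : {e : Sym2 (Fin n) // ¬ e.IsDiag}) =>
        (e.1 ∈ G.edgeSet : Prop)) := by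
    intro G G' h
    apply SimpleGraph.edgeSet_injective
    ext e
    by_cases hd : e.IsDiag
    · constructor
      · intro h'; exact absurd hd (G.not_isDiag_of_mem_edgeSet h')
      · intro h'; exact absurd hd (G'.not_isDiag_of_mem_edgeSet h')
    · exact iff_of_eq (congrFun h ⟨e, hd⟩)
  calc Fintype.card (SimpleGraph (Fin n))
      ≤ Fintype.card ({e : Sym2 (Fin n) // ¬ e.IsDiag} → Prop) :=
        Fintype.card_le_of_injective _ h
    _ = 2 ^ n.choose 2 := by
        rw [Fintype.card_fun, Sym2.card_subtype_not_diag, Fintype.card_fin]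
        norm_num

lemma choose_two_lt_middle (n : ℕ) (hn : 6 ≤ n) :
    n.choose 2 < n.choose (n / 2) := by
  have h23 : n.choose 2 < n.choose 3 := by
    have key : n.choose 3 * 3 = n.choose 2 * (n - 2) := Nat.choose_succ_right_eq n 2
    have hpos : 0 < n.choose 2 := Nat.choose_pos (by omega)
    have : n.choose 2 * 3 < n.choose 2 * (n - 2) :=
      Nat.mul_lt_mul_of_le_of_lt (le_refl _) (by omega) hpos
    rw [← key] at this
    exact Nat.lt_of_mul_lt_mul_right this
  exact lt_of_lt_of_le h23 (Nat.choose_le_middle 3 n)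

/-- For `n ≥ 6`, the number of distinct families of `⌊n/2⌋`-cliques realizable
by simple graphs on `Fin n` is strictly less than `2 ^ C(n, ⌊n/2⌋)`. -/
theorem card_half_clique_families_lt (n : ℕ) (hn : 6 ≤ n) :
    ((fun G : SimpleGraph (Fin n) =>
        {S : Finset (Fin n) | G.IsNClique (n / 2) S}) '' Set.univ).ncard <
      2 ^ n.choose (n / 2) := by
  have h1 : ((fun G : SimpleGraph (Fin n) =>
        {S : Finset (Fin n) | G.IsNClique (n / 2) S}) '' Set.univ).ncard ≤
      Fintype.card (SimpleGraph (Fin n)) := by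
    calc _ ≤ (Set.univ : Set (SimpleGraph (Fin n))).ncard :=
          Set.ncard_image_le (Set.finite_univ)
      _ = Fintype.card (SimpleGraph (Fin n)) := by
          rw [Set.ncard_univ, Nat.card_eq_fintype_card]
  calc ((fun G : SimpleGraph (Fin n) =>
        {S : Finset (Fin n) | G.IsNClique (n / 2) S}) '' Set.univ).ncard
      ≤ 2 ^ n.choose 2 := h1.trans (card_simpleGraph_le n)
    _ < 2 ^ n.choose (n / 2) :=
        Nat.pow_lt_pow_right (by norm_num) (choose_two_lt_middle n hn)
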